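/- Let (Ω, F, (F_j)_{j=0,…,k}, P) be a filtered probability space, and let W_1,…,W_k be random variables with W_j being F_j-measurable and 0 ≤ W_j ≤ 1 almost surely for each j. Let τ be a stopping time with respect to (F_j) with τ ≤ k almost surely. Then for every ε ∈ (0,1/2] and every λ ≥ 0: Pr( Σ_{j≤τ} ( (1−ε)·W_j − E[W_j | F_{j−1}] ) > λ ) ≤ e^{−ελ}. -/

import Mathlib

open MeasureTheory

lemma exp_le_quad {x : ℝ} (hx : |x| ≤ 1) : Real.exp x ≤ 1 + x + x ^ 2 := by
  have h := Real.exp_bound hx (n := 2) (by norm_num)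
  simp only [Finset.sum_range_succ, Finset.sum_range_zero, pow_zero, pow_one,
    Nat.factorial] at h
  norm_num at h
  nlinarith [sq_nonneg x, (abs_le.1 h).2]

lemma condexp_exp_step {Ω : Type*} {m0 : MeasurableSpace Ω} (P : Measure Ω) [IsProbabilityMeasure P]
    {m : MeasurableSpace Ω} (hm : m ≤ m0)
    {V ν : Ω → ℝ} (hVmeas : Measurable[m0] V) (hVmem : ∀ ω, V ω ∈ Set.Icc (0:ℝ) 1)
    (hνsm : StronglyMeasurable[m] ν) (hνmem : ∀ ω, ν ω ∈ Set.Icc (0:ℝ) 1)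
    (hν : P[V|m] =ᵐ[P] ν)
    {ε : ℝ} (hε0 : 0 < ε) (hε2 : ε ≤ 1/2) :
    P[(fun ω => Real.exp (ε * ((1-ε) * V ω - ν ω)))|m] ≤ᵐ[P] (fun _ => (1:ℝ)) := by
  have hνmeas : Measurable[m0] ν := (hνsm.mono hm).measurable
  have hνm : Measurable[m] ν := hνsm.measurable
  have hε1 : ε ≤ 1 := by linarith
  have bdd : ∀ (f : Ω → ℝ), Measurable[m0] f → ∀ C : ℝ, (∀ ω, |f ω| ≤ C) →
      Integrable f P := fun f hf C hC =>
    Integrable.mono' (integrable_const C) hf.aestronglyMeasurable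
      (Filter.Eventually.of_forall fun ω => by simpa using hC ω)
  -- pointwise facts
  have hεν0 : ∀ ω, 0 ≤ ε * ν ω := fun ω => mul_nonneg hε0.le (hνmem ω).1
  have hεν2 : ∀ ω, ε * ν ω ≤ 1/2 :=
    fun ω => le_trans (mul_le_of_le_one_right hε0.le (hνmem ω).2) hε2
  have hεV0 : ∀ ω, 0 ≤ ε * ((1-ε) * V ω) :=
    fun ω => mul_nonneg hε0.le (mul_nonneg (by linarith) (hVmem ω).1)
  have hεV1 : ∀ ω, ε * ((1-ε) * V ω) ≤ 1 := fun ω =>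
    le_trans (mul_le_of_le_one_right hε0.le
      (mul_le_one₀ (by linarith) (hVmem ω).1 (hVmem ω).2)) hε1
  set g : Ω → ℝ := fun ω => (1 - ε) * V ω - ν ω with hg
  have hgabs : ∀ ω, |ε * g ω| ≤ 1 := by
    intro ω
    show |ε * ((1 - ε) * V ω - ν ω)| ≤ 1
    rw [abs_le]
    constructor <;> nlinarith [hεν0 ω, hεν2 ω, hεV0 ω, hεV1 ω]
  have hgmeas : Measurable[m0] g := ((measurable_const.mul hVmeas).sub hνmeas)
  -- integrability
  have hVint : Integrable V P := bdd V hVmeas 1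
    (fun ω => abs_le.2 ⟨by linarith [(hVmem ω).1], (hVmem ω).2⟩)
  have hV2int : Integrable (fun ω => (V ω) ^ 2) P :=
    bdd _ (hVmeas.pow_const 2) 1
      (fun ω => abs_le.2 ⟨by nlinarith [(hVmem ω).1], by nlinarith [(hVmem ω).1, (hVmem ω).2]⟩)
  have hexpint : Integrable (fun ω => Real.exp (ε * g ω)) P := by
    refine bdd _ (Real.measurable_exp.comp (measurable_const.mul hgmeas))
      (Real.exp 1) (fun ω => ?_)
    rw [abs_of_pos (Real.exp_pos _)]
    exact Real.exp_le_exp.2 (le_trans (le_abs_self _) (hgabs ω))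
  set q : Ω → ℝ := fun ω => 1 + ε * g ω + (ε * g ω) ^ 2 with hq
  have hqint : Integrable q P := by
    refine bdd _ ?_ 3 (fun ω => ?_)
    · exact ((measurable_const.add (measurable_const.mul hgmeas)).add
        ((measurable_const.mul hgmeas).pow_const 2))
    · have h1 := hgabs ω
      show |1 + ε * g ω + (ε * g ω) ^ 2| ≤ 3
      rw [abs_le] at h1 ⊢
      constructor <;> nlinarith [sq_nonneg (ε * g ω), h1.1, h1.2]
  have step1 : P[(fun ω => Real.exp (ε * g ω))|m] ≤ᵐ[P] P[q|m] :=
    condExp_mono hexpint hqint (Filter.Eventually.of_forall fun ω => exp_le_quad (hgabs ω))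
  -- decompose q as a + b*V + c*V^2
  set a : Ω → ℝ := fun ω => 1 - ε * ν ω + ε ^ 2 * (ν ω) ^ 2 with ha
  set b : Ω → ℝ := fun ω => ε * (1 - ε) - 2 * ε ^ 2 * (1 - ε) * ν ω with hb
  set c : ℝ := ε ^ 2 * (1 - ε) ^ 2 with hc
  have hqeq : q = fun ω => a ω + (b ω * V ω + c * (V ω) ^ 2) := by
    funext ω; simp only [hq, ha, hb, hc, hg]; ring
  have hasm : StronglyMeasurable[m] a :=
    ((measurable_const.sub (measurable_const.mul hνm)).add
      (measurable_const.mul (hνm.pow_const 2))).stronglyMeasurable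
  have hbsm : StronglyMeasurable[m] b :=
    (measurable_const.sub (measurable_const.mul hνm)).stronglyMeasurable
  -- b is in [0,1]
  have hbmem : ∀ ω, 0 ≤ b ω ∧ b ω ≤ 1 := by
    intro ω
    have hfac : b ω = ε * (1 - ε) * (1 - 2 * (ε * ν ω)) := by
      show ε * (1 - ε) - 2 * ε ^ 2 * (1 - ε) * ν ω = _; ring
    constructor
    · rw [hfac]
      exact mul_nonneg (mul_nonneg hε0.le (by linarith)) (by linarith [hεν2 ω])
    · rw [hfac]
      exact mul_le_one₀ (mul_le_one₀ hε1 (by linarith) (by linarith))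
        (by linarith [hεν2 ω]) (by linarith [hεν0 ω])
  have haint : Integrable a P := by
    refine bdd _ ((hasm.mono hm).measurable) 3 (fun ω => ?_)
    show |1 - ε * ν ω + ε ^ 2 * (ν ω) ^ 2| ≤ 3
    have hsq : (ε * ν ω) ^ 2 ≤ 1 := by nlinarith [hεν0 ω, hεν2 ω]
    rw [abs_le]
    constructor <;> nlinarith [hεν0 ω, hεν2 ω, sq_nonneg (ε * ν ω)]
  have hbVint : Integrable (fun ω => b ω * V ω) P := by
    refine bdd _ ((hbsm.mono hm).measurable.mul hVmeas) 1 (fun ω => ?_)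
    rw [abs_le]
    constructor
    · nlinarith [(hbmem ω).1, (hbmem ω).2, (hVmem ω).1, (hVmem ω).2,
        mul_nonneg (hbmem ω).1 (hVmem ω).1]
    · calc b ω * V ω ≤ 1 * 1 :=
            mul_le_mul (hbmem ω).2 (hVmem ω).2 (hVmem ω).1 zero_le_one
        _ = 1 := one_mul 1
  have hcV2int : Integrable (fun ω => c * (V ω) ^ 2) P := hV2int.const_mul c
  -- conditional expectation computation
  have e1 : P[q|m] =ᵐ[P] fun ω => a ω + ((P[fun ω => b ω * V ω|m]) ω
      + (P[fun ω => c * (V ω) ^ 2|m]) ω) := by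
    rw [hqeq]
    refine (condExp_add haint (hbVint.add hcV2int) m).trans ?_
    have h2 : P[a|m] = a := condExp_of_stronglyMeasurable hm hasm haint
    have h3 := condExp_add hbVint hcV2int (m := m)
    filter_upwards [h3] with ω h3ω
    simp [h2, h3ω, Pi.add_apply]
  have e2 : P[(fun ω => b ω * V ω)|m] =ᵐ[P] fun ω => b ω * ν ω := by
    refine (condExp_mul_of_stronglyMeasurable_left hbsm hbVint hVint).trans ?_
    filter_upwards [hν] with ω hω
    simp [hω]
  have e3 : P[(fun ω => c * (V ω) ^ 2)|m] =ᵐ[P] fun ω => c * (P[fun ω => (V ω)^2|m]) ω := by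
    have := condExp_smul (μ := P) (m := m) c (fun ω => (V ω) ^ 2)
    exact this
  have e4 : P[(fun ω => (V ω) ^ 2)|m] ≤ᵐ[P] ν := by
    refine (condExp_mono hV2int hVint (Filter.Eventually.of_forall fun ω => ?_)).trans hν.le
    show (V ω) ^ 2 ≤ V ω
    nlinarith [(hVmem ω).1, (hVmem ω).2]
  refine step1.trans ?_
  filter_upwards [e1, e2, e3, e4] with ω h1 h2 h3 h4
  rw [h1, h2, h3]
  have hcnn : 0 ≤ c := by positivity
  have key : a ω + b ω * ν ω + c * ν ω ≤ 1 := by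
    show (1 - ε * ν ω + ε ^ 2 * (ν ω) ^ 2) + (ε * (1 - ε) - 2 * ε ^ 2 * (1 - ε) * ν ω) * ν ω
      + (ε ^ 2 * (1 - ε) ^ 2) * ν ω ≤ 1
    have t1 : 0 ≤ ε^3 * ν ω * (2 - ε) :=
      mul_nonneg (mul_nonneg (pow_nonneg hε0.le 3) (hνmem ω).1) (by linarith)
    have t2 : 0 ≤ ε^2 * (ν ω)^2 * (1 - 2*ε) :=
      mul_nonneg (by positivity) (by linarith)
    nlinarith [t1, t2]
  have h6 : c * (P[fun ω => (V ω)^2|m]) ω ≤ c * ν ω := mul_le_mul_of_nonneg_left h4 hcnn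
  show a ω + (b ω * ν ω + c * (P[fun ω => (V ω)^2|m]) ω) ≤ 1
  linarith [key, h6]

lemma condexp_exp_indicator_step {Ω : Type*} {m0 : MeasurableSpace Ω} (P : Measure Ω)
    [IsProbabilityMeasure P] {m : MeasurableSpace Ω} (hm : m ≤ m0)
    {V ν : Ω → ℝ} (hVmeas : Measurable[m0] V) (hVmem : ∀ ω, V ω ∈ Set.Icc (0:ℝ) 1)
    (hνsm : StronglyMeasurable[m] ν) (hνmem : ∀ ω, ν ω ∈ Set.Icc (0:ℝ) 1)
    (hν : P[V|m] =ᵐ[P] ν)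
    {ε : ℝ} (hε0 : 0 < ε) (hε2 : ε ≤ 1/2)
    {A : Set Ω} (hA : MeasurableSet[m] A) :
    P[(fun ω => Real.exp (ε * (A.indicator (fun ω' => (1-ε) * V ω' - ν ω') ω)))|m]
      ≤ᵐ[P] (fun _ => (1:ℝ)) := by
  have hstep := condexp_exp_step P hm hVmeas hVmem hνsm hνmem hν hε0 hε2
  have hνmeas : Measurable[m0] ν := (hνsm.mono hm).measurable
  have hgabs : ∀ ω, |ε * ((1 - ε) * V ω - ν ω)| ≤ 1 := by
    intro ω
    have h1 : 0 ≤ ε * ν ω := mul_nonneg hε0.le (hνmem ω).1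
    have h2 : ε * ν ω ≤ 1/2 :=
      le_trans (mul_le_of_le_one_right hε0.le (hνmem ω).2) hε2
    have h3 : 0 ≤ ε * ((1-ε) * V ω) :=
      mul_nonneg hε0.le (mul_nonneg (by linarith) (hVmem ω).1)
    have h4 : ε * ((1-ε) * V ω) ≤ 1 :=
      le_trans (mul_le_of_le_one_right hε0.le
        (mul_le_one₀ (by linarith) (hVmem ω).1 (hVmem ω).2)) (by linarith)
    rw [abs_le]
    constructor <;> nlinarith [h1, h2, h3, h4]
  have hexpint : Integrable (fun ω => Real.exp (ε * ((1-ε) * V ω - ν ω))) P := by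
    refine Integrable.mono' (integrable_const (Real.exp 1))
      ((Real.measurable_exp.comp
        (measurable_const.mul ((measurable_const.mul hVmeas).sub hνmeas))).aestronglyMeasurable)
      (Filter.Eventually.of_forall fun ω => ?_)
    rw [Real.norm_eq_abs, abs_of_pos (Real.exp_pos _)]
    exact Real.exp_le_exp.2 (le_trans (le_abs_self _) (hgabs ω))
  set f : Ω → ℝ := fun ω => Real.exp (ε * ((1-ε) * V ω - ν ω)) - 1 with hf
  have hfint : Integrable f P := hexpint.sub (integrable_const 1)
  have hiden : (fun ω => Real.exp (ε * (A.indicator (fun ω' => (1-ε) * V ω' - ν ω') ω)))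
      = fun ω => A.indicator f ω + 1 := by
    funext ω
    by_cases hω : ω ∈ A
    · simp [hf, Set.indicator_of_mem hω]
    · simp [Set.indicator_of_notMem hω]
  rw [hiden]
  have hAm0 : MeasurableSet[m0] A := hm _ hA
  have hindint : Integrable (A.indicator f) P := hfint.indicator hAm0
  have hadd : P[(fun ω => A.indicator f ω + 1)|m]
      =ᵐ[P] fun ω => (P[A.indicator f|m]) ω + (P[(fun _ => (1:ℝ))|m]) ω := by
    have := condExp_add hindint (integrable_const (1:ℝ)) (m := m)
    filter_upwards [this] with ω hω
    exact hω
  have hind := condExp_indicator hfint hA (m := m)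
  have hfle : P[f|m] ≤ᵐ[P] fun _ => (0:ℝ) := by
    have hsub := condExp_sub hexpint (integrable_const (1:ℝ)) (m := m)
    have hc : P[(fun _ => (1:ℝ))|m] = fun _ => (1:ℝ) := condExp_const hm 1
    filter_upwards [hsub, hstep] with ω h1 h2
    have : (P[f|m]) ω = (P[(fun ω => Real.exp (ε * ((1-ε) * V ω - ν ω)))|m]) ω
        - (P[(fun _ => (1:ℝ))|m]) ω := h1
    rw [this, hc]
    simpa using sub_nonpos.2 h2
  have hconst : P[(fun _ => (1:ℝ))|m] = fun _ => (1:ℝ) := condExp_const hm 1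
  filter_upwards [hadd, hind, hfle] with ω h1 h2 h3
  rw [h1, h2, hconst]
  have : A.indicator (P[f|m]) ω ≤ 0 := by
    by_cases hω : ω ∈ A
    · rw [Set.indicator_of_mem hω]; exact h3
    · rw [Set.indicator_of_notMem hω]
  simpa using this

/-- Exponential tail bound for adapted `[0,1]`-valued variables up to a
bounded stopping time: for `ε ∈ (0,1/2]` and `λ ≥ 0`,
`Pr( Σ_{j≤τ} ((1−ε)·W_j − E[W_j | F_{j−1}]) > λ ) ≤ exp(−ελ)`. -/
theorem adapted_drift_concentration
    {Ω : Type*} {m0 : MeasurableSpace Ω} (P : Measure Ω) [IsProbabilityMeasure P]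
    (k : ℕ) (𝓕 : Filtration ℕ m0) (W : ℕ → Ω → ℝ)
    (hadapt : ∀ j, 1 ≤ j → j ≤ k → Measurable[𝓕 j] (W j))
    (hbdd : ∀ j, 1 ≤ j → j ≤ k → ∀ᵐ ω ∂P, W j ω ∈ Set.Icc (0 : ℝ) 1)
    (τ : Ω → ℕ) (hτ : IsStoppingTime 𝓕 (fun ω => (τ ω : WithTop ℕ))) (hτk : ∀ᵐ ω ∂P, τ ω ≤ k)
    (ε lam : ℝ) (hε : ε ∈ Set.Ioc (0 : ℝ) (1 / 2)) (hlam : 0 ≤ lam) :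
    P {ω | lam <
        ∑ j ∈ Finset.Icc 1 (τ ω), ((1 - ε) * W j ω - (P[W j|𝓕 (j - 1)]) ω)}
      ≤ ENNReal.ofReal (Real.exp (-(ε * lam))) := by
  obtain ⟨hε0, hε2⟩ := hε
  have hm : ∀ n, (𝓕 n) ≤ m0 := fun n => 𝓕.le n
  classical
  -- truncations
  set V : ℕ → Ω → ℝ := fun j ω => max 0 (min 1 (W j ω)) with hVdef
  have hVmem : ∀ j ω, V j ω ∈ Set.Icc (0:ℝ) 1 :=
    fun j ω => ⟨le_max_left _ _, max_le (by norm_num) (min_le_left _ _)⟩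
  have hVmeasF : ∀ j, 1 ≤ j → j ≤ k → Measurable[𝓕 j] (V j) :=
    fun j h1 hk => measurable_const.max (measurable_const.min (hadapt j h1 hk))
  have hVmeas : ∀ j, 1 ≤ j → j ≤ k → Measurable[m0] (V j) :=
    fun j h1 hk => ((hVmeasF j h1 hk).stronglyMeasurable.mono (hm j)).measurable
  have hVae : ∀ j, 1 ≤ j → j ≤ k → V j =ᵐ[P] W j := by
    intro j h1 hk
    filter_upwards [hbdd j h1 hk] with ω hω
    simp only [hVdef]
    rw [min_eq_right hω.2, max_eq_right hω.1]
  have hVint : ∀ j, 1 ≤ j → j ≤ k → Integrable (V j) P := by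
    intro j h1 hk
    refine Integrable.mono' (integrable_const 1)
      (hVmeas j h1 hk).aestronglyMeasurable (Filter.Eventually.of_forall fun ω => ?_)
    rw [Real.norm_eq_abs, abs_le]
    exact ⟨by linarith [(hVmem j ω).1], (hVmem j ω).2⟩
  -- truncated conditional expectations
  set ν : ℕ → Ω → ℝ := fun j ω => max 0 (min 1 ((P[V j|𝓕 (j-1)]) ω)) with hνdef
  have hνmem : ∀ j ω, ν j ω ∈ Set.Icc (0:ℝ) 1 :=
    fun j ω => ⟨le_max_left _ _, max_le (by norm_num) (min_le_left _ _)⟩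
  have hνsm : ∀ j, StronglyMeasurable[𝓕 (j-1)] (ν j) := fun j =>
    (measurable_const.max (measurable_const.min
      (stronglyMeasurable_condExp (f := V j) (m := 𝓕 (j-1)) (μ := P)).measurable)).stronglyMeasurable
  have hν : ∀ j, 1 ≤ j → j ≤ k → P[V j|𝓕 (j-1)] =ᵐ[P] ν j := by
    intro j h1 hk
    have h0 : 0 ≤ᵐ[P] P[V j|𝓕 (j-1)] :=
      condExp_nonneg (Filter.Eventually.of_forall fun ω => (hVmem j ω).1)
    have hle : P[V j|𝓕 (j-1)] ≤ᵐ[P] fun _ => (1:ℝ) := by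
      have h := condExp_mono (hVint j h1 hk) (integrable_const (1:ℝ))
        (Filter.Eventually.of_forall fun ω => (hVmem j ω).2) (m := 𝓕 (j-1))
      rwa [condExp_const (hm (j-1)) (1:ℝ)] at h
    filter_upwards [h0, hle] with ω hω1 hω2
    simp only [hνdef]
    rw [min_eq_right hω2, max_eq_right (by simpa using hω1)]
  -- conditional expectations of W equal ν a.e.
  have hWν : ∀ j, 1 ≤ j → j ≤ k → P[W j|𝓕 (j-1)] =ᵐ[P] ν j := fun j h1 hk =>
    (condExp_congr_ae (hVae j h1 hk).symm).trans (hν j h1 hk)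
  -- stopping-time sets
  set A : ℕ → Set Ω := fun j => {ω | j ≤ τ ω} with hA
  have hAmeas : ∀ j, 1 ≤ j → MeasurableSet[𝓕 (j-1)] (A j) := by
    intro j h1
    have : A j = {ω | τ ω ≤ j - 1}ᶜ := by
      ext ω; simp only [hA, Set.mem_setOf_eq, Set.mem_compl_iff]; omega
    rw [this]
    exact (by have h := hτ.measurableSet_le (j-1); rw [show {ω | τ ω ≤ j - 1} = {ω | ((τ ω : ℕ) : WithTop ℕ) ≤ ((j - 1 : ℕ) : WithTop ℕ)} from by ext ω; simp only [Set.mem_setOf_eq]; norm_cast]; exact h : MeasurableSet[𝓕 (j-1)] {ω | τ ω ≤ j - 1}).compl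
  -- the increments and partial sums
  set X : ℕ → Ω → ℝ := fun j => (A j).indicator (fun ω => (1-ε) * V j ω - ν j ω) with hX
  set Y : ℕ → Ω → ℝ := fun n ω => ∑ j ∈ Finset.Icc 1 n, X j ω with hY
  have hgabs : ∀ j ω, |(1-ε) * V j ω - ν j ω| ≤ 1 := by
    intro j ω
    rw [abs_le]
    constructor <;>
      nlinarith [(hVmem j ω).1, (hVmem j ω).2, (hνmem j ω).1, (hνmem j ω).2,
        mul_nonneg hε0.le (hVmem j ω).1, mul_le_of_le_one_right hε0.le (hVmem j ω).2]
  have hXabs : ∀ j ω, |X j ω| ≤ 1 := by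
    intro j ω
    simp only [hX]
    by_cases hω : ω ∈ A j
    · rw [Set.indicator_of_mem hω]; exact hgabs j ω
    · rw [Set.indicator_of_notMem hω]; norm_num
  have hXsm : ∀ n, n ≤ k → ∀ j, 1 ≤ j → j ≤ n → StronglyMeasurable[𝓕 n] (X j) := by
    intro n hnk j h1 hjn
    refine StronglyMeasurable.indicator ?_ (𝓕.mono (Nat.sub_le j 1 |>.trans hjn) _ (hAmeas j h1))
    have hV' : Measurable[𝓕 n] (V j) :=
      ((hVmeasF j h1 (hjn.trans hnk)).stronglyMeasurable.mono (𝓕.mono hjn)).measurable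
    have hν' : Measurable[𝓕 n] (ν j) :=
      ((hνsm j).mono (𝓕.mono ((Nat.sub_le j 1).trans hjn))).measurable
    exact ((measurable_const.mul hV').sub hν').stronglyMeasurable
  have hYsm : ∀ n, n ≤ k → StronglyMeasurable[𝓕 n] (Y n) := by
    intro n hnk
    have : StronglyMeasurable[𝓕 n] (fun ω => ∑ j ∈ Finset.Icc 1 n, X j ω) := by
      refine Finset.stronglyMeasurable_fun_sum _ fun j hj => ?_
      rw [Finset.mem_Icc] at hj
      exact hXsm n hnk j hj.1 hj.2
    exact this
  have hYabs : ∀ n ω, |Y n ω| ≤ n := by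
    intro n ω
    calc |Y n ω| ≤ ∑ j ∈ Finset.Icc 1 n, |X j ω| := Finset.abs_sum_le_sum_abs _ _
      _ ≤ ∑ j ∈ Finset.Icc 1 n, 1 := Finset.sum_le_sum fun j _ => hXabs j ω
      _ = (n : ℝ) := by simp [Nat.card_Icc]
  have hexpYint : ∀ n, n ≤ k → Integrable (fun ω => Real.exp (ε * Y n ω)) P := by
    intro n hnk
    refine Integrable.mono' (integrable_const (Real.exp n))
      ((Real.measurable_exp.comp (measurable_const.mul
        (((hYsm n hnk).mono (hm n)).measurable))).aestronglyMeasurable)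
      (Filter.Eventually.of_forall fun ω => ?_)
    rw [Real.norm_eq_abs, abs_of_pos (Real.exp_pos _)]
    refine Real.exp_le_exp.2 ?_
    have h1 : ε * Y n ω ≤ ε * n := mul_le_mul_of_nonneg_left
      (le_trans (le_abs_self _) (hYabs n ω)) hε0.le
    nlinarith [hYabs n ω, abs_nonneg (Y n ω), Nat.cast_nonneg (α := ℝ) n]
  -- key one-step bound
  have hkey : ∀ j, 1 ≤ j → j ≤ k →
      P[(fun ω => Real.exp (ε * X j ω))|𝓕 (j-1)] ≤ᵐ[P] fun _ => (1:ℝ) := by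
    intro j h1 hk
    exact condexp_exp_indicator_step P (hm (j-1)) (hVmeas j h1 hk) (hVmem j)
      (hνsm j) (hνmem j) (hν j h1 hk) hε0 hε2 (hAmeas j h1)
  -- induction: the exponential moment is at most 1
  have hInd : ∀ n, n ≤ k → ∫ ω, Real.exp (ε * Y n ω) ∂P ≤ 1 := by
    intro n
    induction n with
    | zero =>
      intro _
      have h0 : Y 0 = fun _ => (0:ℝ) := by
        funext ω; simp [hY, Finset.Icc_eq_empty (by omega : ¬(1:ℕ) ≤ 0)]
      rw [h0]
      simp
    | succ n ih =>
      intro hnk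
      have hnk' : n ≤ k := le_trans (Nat.le_succ n) hnk
      set F : Ω → ℝ := fun ω => Real.exp (ε * Y n ω) with hF
      set G : Ω → ℝ := fun ω => Real.exp (ε * X (n+1) ω) with hG
      have hsplit : ∀ ω, Y (n+1) ω = Y n ω + X (n+1) ω := by
        intro ω
        simp only [hY]
        exact Finset.sum_Icc_succ_top (by omega) _
      have hFG : (fun ω => Real.exp (ε * Y (n+1) ω)) = fun ω => F ω * G ω := by
        funext ω
        rw [hsplit ω, mul_add, Real.exp_add]
      have hFGint : Integrable (fun ω => F ω * G ω) P := by
        rw [← hFG]; exact hexpYint (n+1) hnk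
      have hGint : Integrable G P := by
        refine Integrable.mono' (integrable_const (Real.exp 1))
          ((Real.measurable_exp.comp (measurable_const.mul
            ((((hXsm (n+1) hnk (n+1) (by omega) le_rfl)).mono
              (hm (n+1))).measurable))).aestronglyMeasurable)
          (Filter.Eventually.of_forall fun ω => ?_)
        rw [Real.norm_eq_abs, abs_of_pos (Real.exp_pos _)]
        refine Real.exp_le_exp.2 ?_
        have := hXabs (n+1) ω
        rw [abs_le] at this
        nlinarith [this.1, this.2]
      have hFsm : StronglyMeasurable[𝓕 n] F :=
        (Real.continuous_exp.comp_stronglyMeasurable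
          ((hYsm n hnk').const_mul ε))
      have hpull : P[(fun ω => F ω * G ω)|𝓕 n] =ᵐ[P] fun ω => F ω * (P[G|𝓕 n]) ω :=
        condExp_mul_of_stronglyMeasurable_left hFsm hFGint hGint
      have hFint : Integrable F P := hexpYint n hnk'
      have hkeyn := hkey (n+1) (by omega) hnk
      have hstep : (n+1) - 1 = n := by omega
      rw [hstep] at hkeyn
      calc ∫ ω, Real.exp (ε * Y (n+1) ω) ∂P = ∫ ω, F ω * G ω ∂P := by rw [hFG]
        _ = ∫ ω, (P[(fun ω => F ω * G ω)|𝓕 n]) ω ∂P := (integral_condExp (hm n)).symm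
        _ = ∫ ω, F ω * (P[G|𝓕 n]) ω ∂P := integral_congr_ae hpull
        _ ≤ ∫ ω, F ω ∂P := by
            refine integral_mono_ae (integrable_condExp.congr hpull) hFint ?_
            filter_upwards [hkeyn] with ω hω
            calc F ω * (P[G|𝓕 n]) ω ≤ F ω * 1 :=
                  mul_le_mul_of_nonneg_left hω (Real.exp_pos _).le
              _ = F ω := mul_one _
        _ ≤ 1 := ih hnk'
  -- the event agrees a.e. with the event for Y k
  have hae1 : ∀ᵐ ω ∂P, ∀ j, 1 ≤ j → j ≤ k → W j ω = V j ω := by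
    rw [ae_all_iff]
    intro j
    by_cases h : 1 ≤ j ∧ j ≤ k
    · filter_upwards [hVae j h.1 h.2] with ω hω _ _
      exact hω.symm
    · filter_upwards with ω h1 hk
      exact absurd ⟨h1, hk⟩ h
  have hae2 : ∀ᵐ ω ∂P, ∀ j, 1 ≤ j → j ≤ k → (P[W j|𝓕 (j-1)]) ω = ν j ω := by
    rw [ae_all_iff]
    intro j
    by_cases h : 1 ≤ j ∧ j ≤ k
    · filter_upwards [hWν j h.1 h.2] with ω hω _ _
      exact hω
    · filter_upwards with ω h1 hk
      exact absurd ⟨h1, hk⟩ h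
  have hsetseq : {ω | lam < ∑ j ∈ Finset.Icc 1 (τ ω),
        ((1 - ε) * W j ω - (P[W j|𝓕 (j - 1)]) ω)} =ᵐ[P] {ω | lam < Y k ω} := by
    rw [Filter.eventuallyEq_set]
    filter_upwards [hτk, hae1, hae2] with ω h1 h2 h3
    have hsum : ∑ j ∈ Finset.Icc 1 (τ ω), ((1 - ε) * W j ω - (P[W j|𝓕 (j - 1)]) ω)
        = Y k ω := by
      have e1 : ∑ j ∈ Finset.Icc 1 (τ ω), ((1 - ε) * W j ω - (P[W j|𝓕 (j - 1)]) ω)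
          = ∑ j ∈ Finset.Icc 1 (τ ω), X j ω := by
        refine Finset.sum_congr rfl fun j hj => ?_
        rw [Finset.mem_Icc] at hj
        have hjk : j ≤ k := le_trans hj.2 h1
        have hmem : ω ∈ A j := hj.2
        rw [h2 j hj.1 hjk, h3 j hj.1 hjk]
        simp only [hX]
        rw [Set.indicator_of_mem hmem]
      have e2 : ∑ j ∈ Finset.Icc 1 (τ ω), X j ω = ∑ j ∈ Finset.Icc 1 k, X j ω := by
        refine Finset.sum_subset (Finset.Icc_subset_Icc_right h1) fun j hj hj' => ?_
        rw [Finset.mem_Icc] at hj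
        rw [Finset.mem_Icc, not_and] at hj'
        have hnotmem : ω ∉ A j := fun hc => hj' hj.1 hc
        simp only [hX]
        exact Set.indicator_of_notMem hnotmem _
      rw [e1, e2]
    simp only [Set.mem_setOf_eq, hsum]
  -- Markov's inequality
  set Z : Ω → ℝ := fun ω => Real.exp (ε * Y k ω) with hZ
  have hZint : Integrable Z P := hexpYint k le_rfl
  have hmarkov := mul_meas_ge_le_integral_of_nonneg
    (Filter.Eventually.of_forall fun ω => (Real.exp_pos (ε * Y k ω)).le) hZint
    (Real.exp (ε * lam))
  have hsub : {ω | lam < Y k ω} ⊆ {ω | Real.exp (ε * lam) ≤ Z ω} := by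
    intro ω hω
    exact Real.exp_le_exp.2 (mul_le_mul_of_nonneg_left (le_of_lt hω) hε0.le)
  have hZle1 : ∫ ω, Z ω ∂P ≤ 1 := hInd k le_rfl
  have htoReal : (P {x | Real.exp (ε * lam) ≤ Z x}).toReal ≤ Real.exp (-(ε * lam)) := by
    have h : Real.exp (ε * lam) * (P {x | Real.exp (ε * lam) ≤ Z x}).toReal ≤ 1 :=
      le_trans hmarkov hZle1
    rw [Real.exp_neg, ← one_div, le_div_iff₀ (Real.exp_pos _)]
    nlinarith [h]
  calc P {ω | lam < ∑ j ∈ Finset.Icc 1 (τ ω), ((1 - ε) * W j ω - (P[W j|𝓕 (j - 1)]) ω)}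
      = P {ω | lam < Y k ω} := measure_congr hsetseq
    _ ≤ P {x | Real.exp (ε * lam) ≤ Z x} := measure_mono hsub
    _ = ENNReal.ofReal ((P {x | Real.exp (ε * lam) ≤ Z x}).toReal) :=
        (ENNReal.ofReal_toReal (measure_ne_top P _)).symm
    _ ≤ ENNReal.ofReal (Real.exp (-(ε * lam))) := ENNReal.ofReal_le_ofReal htoReal
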